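/- Define T : [0,2] → 2^{[0,4)} by T(x) = [0,1] for x ∈ [0,1), T(1) = ∅, and T(x) = (2,3) for x ∈ (1,2], and let D = [1,2]. Then T is lower semicontinuous on [0,2], but for V = (−ε, ε) with ε ∈ (0, 1/2), the closure-of-graph correspondence of T^V(x) = (T(x)+V) ∩ D takes at x = 1 the value [1, 1+ε] ∪ [2−ε, 2], which is not convex. Hence (T^V)‾ need not have convex values even though T^V has convex values. -/
import Mathlib


open Pointwise

/-- Lower semicontinuity of a correspondence on a subset `A` of its domain. -/
def LSCOn {X Y : Type*} [TopologicalSpace X] [TopologicalSpace Y]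
    (T : X → Set Y) (A : Set X) : Prop :=
  ∀ x ∈ A, ∀ V : Set Y, IsOpen V → (T x ∩ V).Nonempty →
    ∃ U : Set X, IsOpen U ∧ x ∈ U ∧ ∀ y ∈ U ∩ A, (T y ∩ V).Nonempty

/-- Closure-of-graph correspondence of `T` regarded as defined on `A`. -/
def gclosOn {X Y : Type*} [TopologicalSpace X] [TopologicalSpace Y]
    (T : X → Set Y) (A : Set X) (x : X) : Set Y :=
  {y | (x, y) ∈ closure {p : X × Y | p.1 ∈ A ∧ p.2 ∈ T p.1}}

noncomputable def Tc : ℝ → Set ℝ := fun x =>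
  if x < 1 then Set.Icc 0 1 else if x = 1 then ∅ else Set.Ioo 2 3

noncomputable def TcV (ε : ℝ) : ℝ → Set ℝ :=
  fun x => (Tc x + Set.Ioo (-ε) ε) ∩ Set.Icc 1 2

theorem stmt9 :
    LSCOn Tc (Set.Icc (0 : ℝ) 2) ∧
    (∀ ε : ℝ, ∀ x : ℝ, Convex ℝ (TcV ε x)) ∧
    (∀ ε ∈ Set.Ioo (0 : ℝ) (1/2),
      gclosOn (TcV ε) (Set.Icc (0 : ℝ) 2) 1 =
        Set.Icc 1 (1 + ε) ∪ Set.Icc (2 - ε) 2 ∧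
      ¬ Convex ℝ (gclosOn (TcV ε) (Set.Icc (0 : ℝ) 2) 1)) := by
  refine ⟨?_, ?_, ?_⟩
  · -- LSC
    intro x hx V hV hne
    rcases lt_trichotomy x 1 with h | h | h
    · refine ⟨Set.Iio 1, isOpen_Iio, h, ?_⟩
      intro y hy
      have hy1 : y < 1 := hy.1
      have hTy : Tc y = Tc x := by simp [Tc, hy1, h]
      rwa [hTy]
    · exact absurd hne (by simp [Tc, h])
    · refine ⟨Set.Ioi 1, isOpen_Ioi, h, ?_⟩
      intro y hy
      have h1 : (1:ℝ) < y := hy.1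
      have hTy : Tc y = Tc x := by
        simp [Tc, not_lt.2 h1.le, h1.ne', not_lt.2 h.le, h.ne']
      rwa [hTy]
  · -- convexity of TcV
    intro ε x
    apply Convex.inter ?_ (convex_Icc 1 2)
    apply Convex.add ?_ (convex_Ioo (-ε) ε)
    unfold Tc
    split_ifs
    · exact convex_Icc 0 1
    · exact convex_empty
    · exact convex_Ioo 2 3
  · -- the closure of graph at 1
    intro ε hε
    obtain ⟨hε0, hε2⟩ := hε
    set G : Set (ℝ × ℝ) :=
      {p : ℝ × ℝ | p.1 ∈ Set.Icc (0:ℝ) 2 ∧ p.2 ∈ TcV ε p.1} with hG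
    have hsub1 : Set.Ico (0:ℝ) 1 ×ˢ Set.Ico (1:ℝ) (1+ε) ⊆ G := by
      rintro ⟨x, y⟩ ⟨hx, hy⟩
      refine ⟨⟨hx.1, by linarith [hx.2]⟩, ?_⟩
      have hTx : Tc x = Set.Icc 0 1 := by simp [Tc, hx.2]
      refine ⟨?_, ⟨hy.1, by linarith [hy.2]⟩⟩
      rw [hTx]
      exact Set.mem_add.2 ⟨1, Set.mem_Icc.2 ⟨zero_le_one, le_refl 1⟩,
        y - 1, Set.mem_Ioo.2 ⟨by linarith [hy.1], by linarith [hy.2]⟩, by ring⟩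
    have hsub2 : Set.Ioc (1:ℝ) 2 ×ˢ Set.Ioc (2-ε) 2 ⊆ G := by
      rintro ⟨x, y⟩ ⟨hx, hy⟩
      refine ⟨⟨by linarith [hx.1], hx.2⟩, ?_⟩
      have hTx : Tc x = Set.Ioo 2 3 := by
        simp [Tc, not_lt.2 hx.1.le, hx.1.ne']
      refine ⟨?_, ⟨by linarith [hy.1], hy.2⟩⟩
      rw [hTx]
      exact Set.mem_add.2 ⟨1 + (y + ε)/2,
        Set.mem_Ioo.2 ⟨by linarith [hy.1], by linarith [hy.2]⟩,
        (y - 2 - ε)/2, Set.mem_Ioo.2 ⟨by linarith [hy.1], by linarith [hy.2]⟩,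
        by ring⟩
    have hsup : G ⊆ Set.univ ×ˢ (Set.Icc (1:ℝ) (1+ε) ∪ Set.Icc (2-ε) 2) := by
      rintro ⟨x, y⟩ ⟨hx, hy⟩
      obtain ⟨hysum, hyI⟩ := hy
      refine ⟨trivial, ?_⟩
      rcases lt_trichotomy x 1 with h | h | h
      · have hTx : Tc x = Set.Icc 0 1 := by simp [Tc, h]
        rw [hTx] at hysum
        obtain ⟨a, ha, b, hb, hab⟩ := Set.mem_add.1 hysum
        exact Or.inl ⟨hyI.1, by
          have := ha.2; have := hb.2; simp at *; linarith⟩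
      · have hTx : Tc x = (∅ : Set ℝ) := by simp [Tc, h]
        rw [hTx] at hysum
        simp at hysum
      · have hTx : Tc x = Set.Ioo 2 3 := by
          simp [Tc, not_lt.2 h.le, h.ne']
        rw [hTx] at hysum
        obtain ⟨a, ha, b, hb, hab⟩ := Set.mem_add.1 hysum
        exact Or.inr ⟨by
          have := ha.1; have := hb.1; simp at *; linarith, hyI.2⟩
    have heq : gclosOn (TcV ε) (Set.Icc (0 : ℝ) 2) 1 =
        Set.Icc 1 (1 + ε) ∪ Set.Icc (2 - ε) 2 := by
      ext y
      constructor
      · intro hy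
        have hcl : closure G ⊆
            Set.univ ×ˢ (Set.Icc (1:ℝ) (1+ε) ∪ Set.Icc (2-ε) 2) :=
          closure_minimal hsup
            (isClosed_univ.prod (isClosed_Icc.union isClosed_Icc))
        exact (hcl hy).2
      · rintro (hy | hy)
        · have h1 : ((1:ℝ), y) ∈ closure (Set.Ico (0:ℝ) 1 ×ˢ Set.Ico (1:ℝ) (1+ε)) := by
            rw [closure_prod_eq, closure_Ico (by norm_num : (0:ℝ) ≠ 1),
              closure_Ico (by linarith : (1:ℝ) ≠ 1+ε)]
            exact ⟨⟨zero_le_one, le_refl 1⟩, hy⟩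
          exact closure_mono hsub1 h1
        · have h1 : ((1:ℝ), y) ∈ closure (Set.Ioc (1:ℝ) 2 ×ˢ Set.Ioc (2-ε) 2) := by
            rw [closure_prod_eq, closure_Ioc (by norm_num : (1:ℝ) ≠ 2),
              closure_Ioc (by linarith : (2:ℝ)-ε ≠ 2)]
            exact ⟨⟨le_refl 1, one_le_two⟩, hy⟩
          exact closure_mono hsub2 h1
    refine ⟨heq, ?_⟩
    rw [heq]
    intro hcv
    have hm := hcv (Or.inl ⟨by linarith, le_refl _⟩ :
        (1+ε) ∈ Set.Icc (1:ℝ) (1+ε) ∪ Set.Icc (2-ε) 2)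
      (Or.inr ⟨le_refl _, by linarith⟩ :
        (2-ε) ∈ Set.Icc (1:ℝ) (1+ε) ∪ Set.Icc (2-ε) 2)
      (by norm_num : (0:ℝ) ≤ 1/2) (by norm_num : (0:ℝ) ≤ 1/2) (by norm_num)
    have h32 : (1/2 : ℝ) • (1+ε) + (1/2 : ℝ) • (2-ε) = 3/2 := by
      simp [smul_eq_mul]; ring
    rw [h32] at hm
    rcases hm with h | h
    · have := h.2; linarith
    · have := h.1; linarith
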